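/- The curvature components of the metric G satisfy: R^{n+3}_{a, b, c} = 0 and R^{n+4}_{a, b, c} = 0 identically for all a, b, c ∈ {1, …, n+4}; and R^a_{b, c, d} = 0 identically whenever at least one of b, c, d equals 1 or 2. -/
import Mathlib


namespace HolPaper

open Matrix

/-- Points of `ℝ^{n+4}`, with coordinates indexed by `Fin (n+4)`.
The paper's index `1` is `p1`, `2` is `p2`, `î ∈ {3,…,n+2}` is `ehat i` for `i : Fin n`,
`n+3` is `q1` and `n+4` is `q2`. -/
abbrev Pt (n : ℕ) := Fin (n + 4) → ℝ

def p1 (n : ℕ) : Fin (n + 4) := ⟨0, by omega⟩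
def p2 (n : ℕ) : Fin (n + 4) := ⟨1, by omega⟩
def ehat {n : ℕ} (i : Fin n) : Fin (n + 4) := ⟨i.1 + 2, by have := i.isLt; omega⟩
def q1 (n : ℕ) : Fin (n + 4) := ⟨n + 2, by omega⟩
def q2 (n : ℕ) : Fin (n + 4) := ⟨n + 3, by omega⟩

noncomputable section

variable {n N : ℕ}

/-- `u^î(x) = Σ_ĵ Σ_α (A_α)_{î-2,ĵ-2} x^ĵ (x^{n+3})^α`. -/
def u (A : Fin N → Matrix (Fin n) (Fin n) ℝ) (i : Fin n) (x : Pt n) : ℝ :=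
  ∑ j : Fin n, ∑ α : Fin N, A α i j * x (ehat j) * x (q1 n) ^ (α.1 + 1)

/-- `F(x) = Σ_î (x^î)²`. -/
def Fq (n : ℕ) (x : Pt n) : ℝ := ∑ i : Fin n, x (ehat i) ^ 2

/-- The Gram matrix `G(x)` of the metric. -/
def Gmet (A : Fin N → Matrix (Fin n) (Fin n) ℝ) (x : Pt n) :
    Matrix (Fin (n + 4)) (Fin (n + 4)) ℝ := fun a b =>
  (if (a = p1 n ∧ b = q1 n) ∨ (a = q1 n ∧ b = p1 n) then (1 : ℝ) else 0)
  + (if (a = p2 n ∧ b = q2 n) ∨ (a = q2 n ∧ b = p2 n) then (1 : ℝ) else 0)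
  + (∑ i : Fin n, if a = ehat i ∧ b = ehat i then (1 : ℝ) else 0)
  + (∑ i : Fin n, if (a = ehat i ∧ b = q2 n) ∨ (a = q2 n ∧ b = ehat i) then u A i x else 0)
  + (if (a = q1 n ∧ b = q1 n) ∨ (a = q2 n ∧ b = q2 n) then Fq n x else 0)

/-- Partial derivative `∂_b f` of a function on `ℝ^{n+4}`. -/
def pd (b : Fin (n + 4)) (f : Pt n → ℝ) (x : Pt n) : ℝ :=
  fderiv ℝ f x (Pi.single b 1)

/-- Christoffel symbols
`Γ^a_{bc} = ½ Σ_d G^{ad} (∂_b G_{dc} + ∂_c G_{bd} − ∂_d G_{bc})`. -/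
def Γchr (A : Fin N → Matrix (Fin n) (Fin n) ℝ) (a b c : Fin (n + 4)) (x : Pt n) : ℝ :=
  (1 / 2) * ∑ d : Fin (n + 4), (Gmet A x)⁻¹ a d *
    (pd b (fun y => Gmet A y d c) x + pd c (fun y => Gmet A y b d) x
      - pd d (fun y => Gmet A y b c) x)

/-- Curvature components
`R^a_{b,c,d} = ∂_c Γ^a_{db} − ∂_d Γ^a_{cb} + Σ_e (Γ^a_{ce} Γ^e_{db} − Γ^a_{de} Γ^e_{cb})`. -/
def Rcurv (A : Fin N → Matrix (Fin n) (Fin n) ℝ) (a b c d : Fin (n + 4)) (x : Pt n) : ℝ :=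
  pd c (Γchr A a d b) x - pd d (Γchr A a c b) x
  + ∑ e : Fin (n + 4), (Γchr A a c e x * Γchr A e d b x - Γchr A a d e x * Γchr A e c b x)

/-- Auxiliary recursion for iterated covariant derivatives of the curvature; the list of
differentiation indices is stored in *reverse* order (most recent derivative first). -/
def covRAux (A : Fin N → Matrix (Fin n) (Fin n) ℝ) :
    Fin (n + 4) → Fin (n + 4) → Fin (n + 4) → Fin (n + 4) → List (Fin (n + 4)) → Pt n → ℝ
  | a, b, c, d, [], x => Rcurv A a b c d x
  | a, b, c, d, f :: fs, x =>
      pd f (covRAux A a b c d fs) x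
      + ∑ l : Fin (n + 4), Γchr A a f l x * covRAux A l b c d fs x
      - ∑ l : Fin (n + 4), Γchr A l f b x * covRAux A a l c d fs x
      - ∑ l : Fin (n + 4), Γchr A l f c x * covRAux A a b l d fs x
      - ∑ l : Fin (n + 4), Γchr A l f d x * covRAux A a b c l fs x
      - ∑ s : Fin fs.length, ∑ l : Fin (n + 4),
          Γchr A l f (fs.get s) x * covRAux A a b c d (fs.set s l) x
  termination_by a b c d fs => fs.length
  decreasing_by all_goals simp [List.length_set]

/-- `covR A a b c d [f_1, …, f_r] x` is the component `R^a_{b,c,d;f_1;…;f_r}(x)` of the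
`r`-th covariant derivative of the curvature tensor (indices in natural order). -/
def covR (A : Fin N → Matrix (Fin n) (Fin n) ℝ) (a b c d : Fin (n + 4))
    (fs : List (Fin (n + 4))) (x : Pt n) : ℝ :=
  covRAux A a b c d fs.reverse x



-- distinctness
@[simp] lemma p1_ne_p2 : p1 n ≠ p2 n := by simp [p1, p2, Fin.ext_iff]
@[simp] lemma p2_ne_p1 : p2 n ≠ p1 n := by simp [p1, p2, Fin.ext_iff]
@[simp] lemma p1_ne_ehat {i : Fin n} : p1 n ≠ ehat i := by simp [p1, ehat, Fin.ext_iff]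
@[simp] lemma ehat_ne_p1 {i : Fin n} : ehat i ≠ p1 n := by simp [p1, ehat, Fin.ext_iff]
@[simp] lemma p2_ne_ehat {i : Fin n} : p2 n ≠ ehat i := by simp [p2, ehat, Fin.ext_iff]
@[simp] lemma ehat_ne_p2 {i : Fin n} : ehat i ≠ p2 n := by simp [p2, ehat, Fin.ext_iff]
@[simp] lemma p1_ne_q1 : p1 n ≠ q1 n := by simp [p1, q1, Fin.ext_iff]
@[simp] lemma q1_ne_p1 : q1 n ≠ p1 n := by simp [p1, q1, Fin.ext_iff]
@[simp] lemma p2_ne_q1 : p2 n ≠ q1 n := by simp [p2, q1, Fin.ext_iff]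
@[simp] lemma q1_ne_p2 : q1 n ≠ p2 n := by simp [p2, q1, Fin.ext_iff]
@[simp] lemma p1_ne_q2 : p1 n ≠ q2 n := by simp [p1, q2, Fin.ext_iff]
@[simp] lemma q2_ne_p1 : q2 n ≠ p1 n := by simp [p1, q2, Fin.ext_iff]
@[simp] lemma p2_ne_q2 : p2 n ≠ q2 n := by simp [p2, q2, Fin.ext_iff]
@[simp] lemma q2_ne_p2 : q2 n ≠ p2 n := by simp [p2, q2, Fin.ext_iff]
@[simp] lemma ehat_ne_q1 {i : Fin n} : ehat i ≠ q1 n := by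
  have := i.isLt; simp [q1, ehat, Fin.ext_iff]; omega
@[simp] lemma q1_ne_ehat {i : Fin n} : q1 n ≠ ehat i := by
  have := i.isLt; simp [q1, ehat, Fin.ext_iff]; omega
@[simp] lemma ehat_ne_q2 {i : Fin n} : ehat i ≠ q2 n := by
  have := i.isLt; simp [q2, ehat, Fin.ext_iff]; omega
@[simp] lemma q2_ne_ehat {i : Fin n} : q2 n ≠ ehat i := by
  have := i.isLt; simp [q2, ehat, Fin.ext_iff]; omega
@[simp] lemma q1_ne_q2 : q1 n ≠ q2 n := by simp [q1, q2, Fin.ext_iff]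
@[simp] lemma q2_ne_q1 : q2 n ≠ q1 n := by simp [q1, q2, Fin.ext_iff]
@[simp] lemma ehat_inj {i j : Fin n} : ehat i = ehat j ↔ i = j := by
  simp [ehat, Fin.ext_iff]

lemma cases_index (d : Fin (n + 4)) :
    d = p1 n ∨ d = p2 n ∨ (∃ i : Fin n, d = ehat i) ∨ d = q1 n ∨ d = q2 n := by
  rcases d with ⟨v, hv⟩
  by_cases h0 : v = 0
  · exact Or.inl (by simp [p1, Fin.ext_iff, h0])
  by_cases h1 : v = 1
  · exact Or.inr (Or.inl (by simp [p2, Fin.ext_iff, h1]))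
  by_cases h2 : v = n + 2
  · exact Or.inr (Or.inr (Or.inr (Or.inl (by simp [q1, Fin.ext_iff, h2]))))
  by_cases h3 : v = n + 3
  · exact Or.inr (Or.inr (Or.inr (Or.inr (by simp [q2, Fin.ext_iff, h3]))))
  · refine Or.inr (Or.inr (Or.inl ⟨⟨v - 2, by omega⟩, ?_⟩))
    simp only [ehat, Fin.ext_iff]; omega

lemma sum_split (f : Fin (n + 4) → ℝ) :
    ∑ d : Fin (n + 4), f d
      = f (p1 n) + f (p2 n) + (∑ i : Fin n, f (ehat i)) + f (q1 n) + f (q2 n) := by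
  rw [Fin.sum_univ_succ, Fin.sum_univ_succ, Fin.sum_univ_castSucc, Fin.sum_univ_castSucc]
  have e0 : (0 : Fin (n + 4)) = p1 n := by simp [p1, Fin.ext_iff]
  have e1 : ((0 : Fin (n + 3)).succ) = p2 n := by simp [p2, Fin.ext_iff]
  have e2 : ∀ i : Fin n, (((i.castSucc.castSucc).succ).succ) = ehat i := by
    intro i; simp [ehat, Fin.ext_iff]
  have e3 : ((((Fin.last n).castSucc).succ).succ) = q1 n := by
    simp [q1, Fin.ext_iff]
  have e4 : (((Fin.last (n + 1)).succ).succ) = q2 n := by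
    simp [q2, Fin.ext_iff]
  rw [e0, e1, e3, e4]
  simp only [e2]
  ring

-- pd machinery
lemma pd_const (b : Fin (n + 4)) (k : ℝ) (x : Pt n) : pd b (fun _ => k) x = 0 := by
  simp [pd, fderiv_const]

lemma diff_translate {f : Pt n → ℝ} {c : Pt n} (hf : ∀ y, f (y + c) = f y) {x : Pt n}
    (h : DifferentiableAt ℝ f x) : DifferentiableAt ℝ f (x + c) := by
  have h1 : (fun y => f (y + -c)) = f := by
    funext y
    have := (hf (y + -c)).symm
    simpa using this
  rw [← h1]
  have h2 : DifferentiableAt ℝ f ((x + c) + -c) := by simpa using h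
  have h3 : DifferentiableAt ℝ (fun y : Pt n => y + -c) (x + c) :=
    (differentiableAt_id.add_const _)
  exact DifferentiableAt.comp (x + c) h2 h3

lemma fderiv_translate {f : Pt n → ℝ} {c : Pt n} (hf : ∀ y, f (y + c) = f y) (x : Pt n)
    (hd : DifferentiableAt ℝ f (x + c)) : fderiv ℝ f (x + c) = fderiv ℝ f x := by
  have hT : HasFDerivAt (fun y : Pt n => y + c) (ContinuousLinearMap.id ℝ (Pt n)) x :=
    (hasFDerivAt_id x).add_const c
  have hcomp : HasFDerivAt (fun y => f (y + c))
      ((fderiv ℝ f (x + c)).comp (ContinuousLinearMap.id ℝ (Pt n))) x :=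
    hd.hasFDerivAt.comp x hT
  have heq : (fun y => f (y + c)) = f := funext hf
  rw [heq] at hcomp
  rw [hcomp.fderiv]
  simp

lemma pd_translate {f : Pt n → ℝ} {c : Pt n} (hf : ∀ y, f (y + c) = f y) (b : Fin (n + 4))
    (x : Pt n) : pd b f (x + c) = pd b f x := by
  by_cases hd : DifferentiableAt ℝ f (x + c)
  · rw [pd, pd, fderiv_translate hf x hd]
  · have hd' : ¬ DifferentiableAt ℝ f x := fun h => hd (diff_translate hf h)
    rw [pd, pd, fderiv_zero_of_not_differentiableAt hd,
      fderiv_zero_of_not_differentiableAt hd']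

lemma pd_self_zero {f : Pt n → ℝ} {b : Fin (n + 4)}
    (hf : ∀ (y : Pt n) (s : ℝ), f (y + s • (Pi.single b 1 : Pt n)) = f y) (x : Pt n) :
    pd b f x = 0 := by
  by_cases hd : DifferentiableAt ℝ f x
  · have hline : HasDerivAt (fun t : ℝ => x + t • (Pi.single b 1 : Pt n)) ((Pi.single b 1 : Pt n)) 0 := by
      have h1 : HasDerivAt (fun t : ℝ => t • (Pi.single b 1 : Pt n))
          ((1:ℝ) • (Pi.single b 1 : Pt n)) 0 := (hasDerivAt_id 0).smul_const _
      simpa using h1.const_add x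
    have hf' : HasFDerivAt f (fderiv ℝ f x) (x + (0:ℝ) • (Pi.single b 1 : Pt n)) := by
      simpa using hd.hasFDerivAt
    have h1 : HasDerivAt (fun t : ℝ => f (x + t • (Pi.single b 1 : Pt n)))
        (fderiv ℝ f x ((Pi.single b 1 : Pt n))) 0 := hf'.comp_hasDerivAt 0 hline
    have h2 : (fun t : ℝ => f (x + t • (Pi.single b 1 : Pt n))) = fun _ => f x :=
      funext fun t => hf x t
    rw [h2] at h1
    have h3 := h1.unique (hasDerivAt_const 0 (f x))
    rw [pd, h3]
  · rw [pd, fderiv_zero_of_not_differentiableAt hd]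
    simp

lemma apply_add_smul_single (y : Pt n) (s : ℝ) {b a : Fin (n + 4)} (hab : a ≠ b) :
    (y + s • (Pi.single b 1 : Pt n)) a = y a := by
  simp [Pi.single_eq_of_ne hab]


-- Gmet row/column lemmas
variable {A : Fin N → Matrix (Fin n) (Fin n) ℝ}

lemma Gmet_comm (x : Pt n) (a b : Fin (n + 4)) : Gmet A x a b = Gmet A x b a := by
  unfold Gmet
  congr 1
  · congr 1
    · congr 1
      · congr 1
        · exact if_congr (by tauto) rfl rfl
        · exact if_congr (by tauto) rfl rfl
      · exact Finset.sum_congr rfl fun i _ => if_congr (by tauto) rfl rfl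
    · exact Finset.sum_congr rfl fun i _ => if_congr (by tauto) rfl rfl
  · exact if_congr (by tauto) rfl rfl

lemma Gmet_row_p1 (x : Pt n) (b : Fin (n + 4)) :
    Gmet A x (p1 n) b = if b = q1 n then 1 else 0 := by
  simp [Gmet]

lemma Gmet_row_p2 (x : Pt n) (b : Fin (n + 4)) :
    Gmet A x (p2 n) b = if b = q2 n then 1 else 0 := by
  simp [Gmet]

lemma Gmet_row_ehat (x : Pt n) (i : Fin n) (b : Fin (n + 4)) :
    Gmet A x (ehat i) b
      = (if b = ehat i then 1 else 0) + (if b = q2 n then u A i x else 0) := by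
  simp [Gmet, ite_and]

lemma Gmet_row_q1 (x : Pt n) (b : Fin (n + 4)) :
    Gmet A x (q1 n) b
      = (if b = p1 n then 1 else 0) + (if b = q1 n then Fq n x else 0) := by
  simp [Gmet]

lemma Gmet_row_q2 (x : Pt n) (b : Fin (n + 4)) :
    Gmet A x (q2 n) b
      = (if b = p2 n then 1 else 0) + (∑ i : Fin n, if b = ehat i then u A i x else 0)
        + (if b = q2 n then Fq n x else 0) := by
  simp [Gmet]


-- translation invariance
lemma u_translate {b0 : Fin (n + 4)} (h1 : ∀ j : Fin n, ehat j ≠ b0) (h2 : q1 n ≠ b0)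
    (i : Fin n) (y : Pt n) (s : ℝ) :
    u A i (y + s • (Pi.single b0 1 : Pt n)) = u A i y := by
  unfold u
  refine Finset.sum_congr rfl fun j _ => Finset.sum_congr rfl fun α _ => ?_
  rw [apply_add_smul_single y s (h1 j), apply_add_smul_single y s h2]

lemma Fq_translate {b0 : Fin (n + 4)} (h1 : ∀ j : Fin n, ehat j ≠ b0) (y : Pt n) (s : ℝ) :
    Fq n (y + s • (Pi.single b0 1 : Pt n)) = Fq n y := by
  unfold Fq
  refine Finset.sum_congr rfl fun j _ => ?_
  rw [apply_add_smul_single y s (h1 j)]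

lemma Gmet_translate {b0 : Fin (n + 4)} (h1 : ∀ j : Fin n, ehat j ≠ b0) (h2 : q1 n ≠ b0)
    (y : Pt n) (s : ℝ) :
    Gmet A (y + s • (Pi.single b0 1 : Pt n)) = Gmet A y := by
  funext a b
  unfold Gmet
  simp only [u_translate h1 h2, Fq_translate h1]

lemma Γchr_translate {b0 : Fin (n + 4)} (h1 : ∀ j : Fin n, ehat j ≠ b0) (h2 : q1 n ≠ b0)
    (a b c : Fin (n + 4)) (x : Pt n) (s : ℝ) :
    Γchr A a b c (x + s • (Pi.single b0 1 : Pt n)) = Γchr A a b c x := by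
  unfold Γchr
  have hG : ∀ y : Pt n, Gmet A (y + s • (Pi.single b0 1 : Pt n)) = Gmet A y :=
    fun y => Gmet_translate h1 h2 y s
  rw [hG x]
  congr 1
  refine Finset.sum_congr rfl fun d _ => ?_
  congr 1
  have e1 : pd b (fun y => Gmet A y d c) (x + s • (Pi.single b0 1 : Pt n))
      = pd b (fun y => Gmet A y d c) x :=
    pd_translate (fun y => by rw [hG y]) b x
  have e2 : pd c (fun y => Gmet A y b d) (x + s • (Pi.single b0 1 : Pt n))
      = pd c (fun y => Gmet A y b d) x :=
    pd_translate (fun y => by rw [hG y]) c x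
  have e3 : pd d (fun y => Gmet A y b c) (x + s • (Pi.single b0 1 : Pt n))
      = pd d (fun y => Gmet A y b c) x :=
    pd_translate (fun y => by rw [hG y]) d x
  rw [e1, e2, e3]


-- explicit inverse
def Hmat (A : Fin N → Matrix (Fin n) (Fin n) ℝ) (x : Pt n) :
    Matrix (Fin (n + 4)) (Fin (n + 4)) ℝ := fun a b =>
  (if a = p1 n ∧ b = p1 n then -(Fq n x) else 0)
  + (if (a = p1 n ∧ b = q1 n) ∨ (a = q1 n ∧ b = p1 n) then 1 else 0)
  + (if a = p2 n ∧ b = p2 n then (∑ i : Fin n, (u A i x) ^ 2) - Fq n x else 0)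
  + (if (a = p2 n ∧ b = q2 n) ∨ (a = q2 n ∧ b = p2 n) then 1 else 0)
  + (∑ i : Fin n, if (a = p2 n ∧ b = ehat i) ∨ (a = ehat i ∧ b = p2 n) then -(u A i x) else 0)
  + (∑ i : Fin n, if a = ehat i ∧ b = ehat i then 1 else 0)

lemma Hmat_row_p1 (x : Pt n) (b : Fin (n + 4)) :
    Hmat A x (p1 n) b = (if b = p1 n then -(Fq n x) else 0) + (if b = q1 n then 1 else 0) := by
  simp [Hmat]

lemma Hmat_row_p2 (x : Pt n) (b : Fin (n + 4)) :
    Hmat A x (p2 n) b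
      = (if b = p2 n then (∑ i : Fin n, (u A i x) ^ 2) - Fq n x else 0)
        + (if b = q2 n then 1 else 0)
        + (∑ i : Fin n, if b = ehat i then -(u A i x) else 0) := by
  simp [Hmat]

lemma Hmat_row_ehat (x : Pt n) (i : Fin n) (b : Fin (n + 4)) :
    Hmat A x (ehat i) b
      = (if b = p2 n then -(u A i x) else 0) + (if b = ehat i then 1 else 0) := by
  simp [Hmat, ite_and]

lemma Hmat_row_q1 (x : Pt n) (b : Fin (n + 4)) :
    Hmat A x (q1 n) b = if b = p1 n then 1 else 0 := by
  simp [Hmat]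

lemma Hmat_row_q2 (x : Pt n) (b : Fin (n + 4)) :
    Hmat A x (q2 n) b = if b = p2 n then 1 else 0 := by
  simp [Hmat]

lemma Gmet_mul_Hmat (x : Pt n) : Gmet A x * Hmat A x = 1 := by
  ext a b
  rw [Matrix.mul_apply]
  rcases cases_index a with ha | ha | ⟨i, ha⟩ | ha | ha <;> subst ha
  · -- a = p1
    rw [sum_split (fun d => Gmet A x (p1 n) d * Hmat A x d b)]
    simp only [Gmet_row_p1, Hmat_row_q1]
    simp [Matrix.one_apply, eq_comm]
  · -- a = p2
    rw [sum_split (fun d => Gmet A x (p2 n) d * Hmat A x d b)]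
    simp only [Gmet_row_p2, Hmat_row_q2]
    simp [Matrix.one_apply, eq_comm]
  · -- a = ehat i
    rw [sum_split (fun d => Gmet A x (ehat i) d * Hmat A x d b)]
    simp only [Gmet_row_ehat, Hmat_row_p1, Hmat_row_p2, Hmat_row_ehat, Hmat_row_q1,
      Hmat_row_q2]
    rcases cases_index b with hb | hb | ⟨j, hb⟩ | hb | hb <;> subst hb <;>
      simp [Matrix.one_apply, Finset.sum_ite_eq, Finset.sum_ite_eq', eq_comm] <;> ring
  · -- a = q1
    rw [sum_split (fun d => Gmet A x (q1 n) d * Hmat A x d b)]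
    simp only [Gmet_row_q1, Hmat_row_p1, Hmat_row_p2, Hmat_row_ehat, Hmat_row_q1,
      Hmat_row_q2]
    rcases cases_index b with hb | hb | ⟨j, hb⟩ | hb | hb <;> subst hb <;>
      simp [Matrix.one_apply] <;> ring
  · -- a = q2
    rw [sum_split (fun d => Gmet A x (q2 n) d * Hmat A x d b)]
    simp only [Gmet_row_q2, Hmat_row_p1, Hmat_row_p2, Hmat_row_ehat, Hmat_row_q1,
      Hmat_row_q2]
    rcases cases_index b with hb | hb | ⟨j, hb⟩ | hb | hb <;> subst hb <;>
      simp [Matrix.one_apply, Finset.sum_ite_eq, Finset.sum_ite_eq', pow_two,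
        Finset.mul_sum, Finset.sum_sub_distrib] <;> ring

lemma Gmet_inv_eq (x : Pt n) : (Gmet A x)⁻¹ = Hmat A x :=
  Matrix.inv_eq_right_inv (Gmet_mul_Hmat x)


-- Christoffel symbol lemmas
lemma ehat_ne_of_p (b0 : Fin (n + 4)) (hb : b0 = p1 n ∨ b0 = p2 n) (j : Fin n) :
    ehat j ≠ b0 := by rcases hb with h | h <;> subst h <;> simp

lemma q1_ne_of_p (b0 : Fin (n + 4)) (hb : b0 = p1 n ∨ b0 = p2 n) : q1 n ≠ b0 := by
  rcases hb with h | h <;> subst h <;> simp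

lemma Gmet_row_const (b0 : Fin (n + 4)) (hb : b0 = p1 n ∨ b0 = p2 n) (b : Fin (n + 4)) :
    ∃ k : ℝ, ∀ y : Pt n, Gmet A y b0 b = k := by
  rcases hb with h | h <;> subst h
  · exact ⟨_, fun y => Gmet_row_p1 y b⟩
  · exact ⟨_, fun y => Gmet_row_p2 y b⟩

lemma Gmet_col_const (b0 : Fin (n + 4)) (hb : b0 = p1 n ∨ b0 = p2 n) (b : Fin (n + 4)) :
    ∃ k : ℝ, ∀ y : Pt n, Gmet A y b b0 = k := by
  obtain ⟨k, hk⟩ := Gmet_row_const (A := A) b0 hb b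
  exact ⟨k, fun y => (Gmet_comm y b b0).trans (hk y)⟩

lemma pd_entry_zero (b0 : Fin (n + 4)) (hb : b0 = p1 n ∨ b0 = p2 n) (b c : Fin (n + 4))
    (x : Pt n) : pd b0 (fun y => Gmet A y b c) x = 0 := by
  refine pd_self_zero (fun y s => ?_) x
  have := Gmet_translate (A := A) (ehat_ne_of_p b0 hb) (q1_ne_of_p b0 hb) y s
  exact congrFun (congrFun this b) c

lemma pd_row_const_zero (b0 : Fin (n + 4)) (hb : b0 = p1 n ∨ b0 = p2 n)
    (e b : Fin (n + 4)) (x : Pt n) : pd e (fun y => Gmet A y b0 b) x = 0 := by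
  obtain ⟨k, hk⟩ := Gmet_row_const (A := A) b0 hb b
  have : (fun y : Pt n => Gmet A y b0 b) = fun _ => k := funext hk
  rw [this, pd_const]

lemma pd_col_const_zero (b0 : Fin (n + 4)) (hb : b0 = p1 n ∨ b0 = p2 n)
    (e b : Fin (n + 4)) (x : Pt n) : pd e (fun y => Gmet A y b b0) x = 0 := by
  obtain ⟨k, hk⟩ := Gmet_col_const (A := A) b0 hb b
  have : (fun y : Pt n => Gmet A y b b0) = fun _ => k := funext hk
  rw [this, pd_const]

/-- Γ vanishes when the middle lower index is p1 or p2. -/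
lemma Γchr_mid_zero (a : Fin (n + 4)) (b0 : Fin (n + 4)) (hb : b0 = p1 n ∨ b0 = p2 n)
    (c : Fin (n + 4)) (x : Pt n) : Γchr A a b0 c x = 0 := by
  unfold Γchr
  rw [Finset.sum_eq_zero]
  · simp
  · intro d _
    rw [pd_entry_zero b0 hb d c x, pd_row_const_zero b0 hb c d x,
      pd_row_const_zero b0 hb d c x]
    ring

/-- Γ vanishes when the last lower index is p1 or p2. -/
lemma Γchr_last_zero (a b : Fin (n + 4)) (c0 : Fin (n + 4)) (hc : c0 = p1 n ∨ c0 = p2 n)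
    (x : Pt n) : Γchr A a b c0 x = 0 := by
  unfold Γchr
  rw [Finset.sum_eq_zero]
  · simp
  · intro d _
    rw [pd_entry_zero c0 hc b d x, pd_col_const_zero c0 hc b d x,
      pd_col_const_zero c0 hc d b x]
    ring

/-- Γ with upper index q1 or q2 vanishes. -/
lemma Γchr_top_zero (a0 : Fin (n + 4)) (ha : a0 = q1 n ∨ a0 = q2 n) (b c : Fin (n + 4))
    (x : Pt n) : Γchr A a0 b c x = 0 := by
  unfold Γchr
  rw [Gmet_inv_eq]
  have hp : ∃ b0, (b0 = p1 n ∨ b0 = p2 n) ∧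
      ∀ d, Hmat A x a0 d = if d = b0 then 1 else 0 := by
    rcases ha with h | h <;> subst h
    · exact ⟨p1 n, Or.inl rfl, fun d => Hmat_row_q1 x d⟩
    · exact ⟨p2 n, Or.inr rfl, fun d => Hmat_row_q2 x d⟩
  obtain ⟨b0, hb0, hrow⟩ := hp
  simp only [hrow, ite_mul, one_mul, zero_mul]
  rw [Finset.sum_ite_eq' Finset.univ b0]
  simp only [Finset.mem_univ, if_true]
  rw [pd_row_const_zero b0 hb0 b c x, pd_col_const_zero b0 hb0 c b x,
    pd_entry_zero b0 hb0 b c x]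
  ring

/-- partial derivative of Γ in the p1/p2 directions vanishes. -/
lemma pd_Γchr_zero (b0 : Fin (n + 4)) (hb : b0 = p1 n ∨ b0 = p2 n) (a b c : Fin (n + 4))
    (x : Pt n) : pd b0 (Γchr A a b c) x = 0 :=
  pd_self_zero
    (fun y s => Γchr_translate (ehat_ne_of_p b0 hb) (q1_ne_of_p b0 hb) a b c y s) x


lemma Rcurv_top_zero (a0 : Fin (n + 4)) (ha : a0 = q1 n ∨ a0 = q2 n)
    (a b c : Fin (n + 4)) (x : Pt n) : Rcurv A a0 a b c x = 0 := by
  unfold Rcurv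
  have h1 : ∀ d e : Fin (n + 4), Γchr A a0 d e = fun _ : Pt n => 0 :=
    fun d e => funext fun y => Γchr_top_zero a0 ha d e y
  simp only [h1, pd_const]
  simp

lemma Rcurv_low_zero (a b c d : Fin (n + 4))
    (h : b = p1 n ∨ b = p2 n ∨ c = p1 n ∨ c = p2 n ∨ d = p1 n ∨ d = p2 n) (x : Pt n) :
    Rcurv A a b c d x = 0 := by
  unfold Rcurv
  have hlast : ∀ (b0 : Fin (n + 4)), b0 = p1 n ∨ b0 = p2 n →
      ∀ u v : Fin (n + 4), Γchr A u v b0 = fun _ : Pt n => 0 :=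
    fun b0 hb0 u v => funext fun y => Γchr_last_zero u v b0 hb0 y
  have hmid : ∀ (b0 : Fin (n + 4)), b0 = p1 n ∨ b0 = p2 n →
      ∀ u v : Fin (n + 4), Γchr A u b0 v = fun _ : Pt n => 0 :=
    fun b0 hb0 u v => funext fun y => Γchr_mid_zero u b0 hb0 v y
  rcases h with h | h | h | h | h | h
  · subst h; simp only [hlast (p1 n) (Or.inl rfl), pd_const]; simp
  · subst h; simp only [hlast (p2 n) (Or.inr rfl), pd_const]; simp
  · subst h
    rw [pd_Γchr_zero (p1 n) (Or.inl rfl) a d b x]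
    simp only [hmid (p1 n) (Or.inl rfl), pd_const]
    simp
  · subst h
    rw [pd_Γchr_zero (p2 n) (Or.inr rfl) a d b x]
    simp only [hmid (p2 n) (Or.inr rfl), pd_const]
    simp
  · subst h
    rw [pd_Γchr_zero (p1 n) (Or.inl rfl) a c b x]
    simp only [hmid (p1 n) (Or.inl rfl), pd_const]
    simp
  · subst h
    rw [pd_Γchr_zero (p2 n) (Or.inr rfl) a c b x]
    simp only [hmid (p2 n) (Or.inr rfl), pd_const]
    simp


/-- `R^{n+3}_{a,b,c} = R^{n+4}_{a,b,c} = 0`, and `R^a_{b,c,d} = 0` whenever one of the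
lower indices `b, c, d` equals `1` or `2`. -/
theorem statement7 (n N : ℕ) (hn : 1 ≤ n) (hN : 1 ≤ N)
    (A : Fin N → Matrix (Fin n) (Fin n) ℝ) (hA : ∀ α, (A α)ᵀ = -A α) :
    (∀ (a b c : Fin (n + 4)) (x : Pt n),
      Rcurv A (q1 n) a b c x = 0 ∧ Rcurv A (q2 n) a b c x = 0) ∧
    (∀ (a b c d : Fin (n + 4)),
      (b = p1 n ∨ b = p2 n ∨ c = p1 n ∨ c = p2 n ∨ d = p1 n ∨ d = p2 n) →
      ∀ x : Pt n, Rcurv A a b c d x = 0) := by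
  exact ⟨fun a b c x =>
    ⟨Rcurv_top_zero (q1 n) (Or.inl rfl) a b c x,
     Rcurv_top_zero (q2 n) (Or.inr rfl) a b c x⟩,
   fun a b c d h x => Rcurv_low_zero a b c d h x⟩

end
end HolPaper
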